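/- Let β > 2 be irrational, let α satisfy 1/α + 1/β = 1, and let S = {⌊βn⌋ : n ∈ ℤ_{>0}}. If (x,y) is a legal position of 2-pile S-Nim such that {x,y} ≠ {⌊αn⌋, ⌊βn⌋} for all integers n ≥ 0, then there exists a legal move from (x,y) to a position (x',y') with {x',y'} = {⌊αm⌋, ⌊βm⌋} for some integer m ≥ 0. -/

import Mathlib

/-- A Nim move on two heaps: strictly decrease exactly one coordinate. -/
def Move (p q : ℕ × ℕ) : Prop :=
  (q.1 < p.1 ∧ q.2 = p.2) ∨ (q.1 = p.1 ∧ q.2 < p.2)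

/-- A position of 2-pile S-Nim is legal if at least one heap is "black",
i.e. its size lies in `S` or it is empty. -/
def Legal (S : Set ℕ) (p : ℕ × ℕ) : Prop :=
  p.1 ∈ S ∪ {0} ∨ p.2 ∈ S ∪ {0}

section Aux

variable {β α : ℝ}

lemma aux_alpha (hβ : 2 < β) (hα : 1 / α + 1 / β = 1) :
    1 < α ∧ α < 2 := by
  have hβ0 : (0:ℝ) < β := by linarith
  have h1 : 1 / α = 1 - 1 / β := by linarith
  have hb1 : 1 / β < 1 / 2 := by
    rw [div_lt_div_iff₀ hβ0 (by norm_num)]; linarith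
  have hb0 : 0 < 1 / β := by positivity
  have hinvpos : 0 < 1 / α := by rw [h1]; linarith
  have hinvlt : 1 / α < 1 := by rw [h1]; linarith
  have h12 : 1 / 2 < 1 / α := by rw [h1]; linarith
  have hαpos : 0 < α := by
    by_contra h
    push_neg at h
    have : 1 / α ≤ 0 := one_div_nonpos.mpr h
    linarith
  have hc : α * (1 / α) = 1 := by field_simp
  constructor
  · nlinarith [mul_pos hαpos (sub_pos.mpr hinvlt)]
  · nlinarith [mul_pos hαpos (sub_pos.mpr h12)]

lemma aux_irr (hβ : 2 < β) (hirr : Irrational β) (hα : 1 / α + 1 / β = 1) :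
    Irrational α := by
  have hβ0 : (0:ℝ) < β := by linarith
  obtain ⟨hα1, hα2⟩ := aux_alpha hβ hα
  have hαpos : 0 < α := by linarith
  have hb1 : Irrational (β - 1) := by simpa using hirr.sub_intCast 1
  have h2 : Irrational (1 + (β - 1)⁻¹) := by simpa using hb1.inv.intCast_add 1
  have heq : α = 1 + (β - 1)⁻¹ := by
    have hne : β - 1 ≠ 0 := by intro h; linarith
    field_simp at hα ⊢
    nlinarith [hα]
  rwa [heq]

/-- strict monotonicity of n ↦ ⌊r n⌋ for r > 1 -/
lemma floor_strict (hr : 1 < r) (m n : ℕ) (h : m < n) :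
    ⌊r * (m:ℝ)⌋ < ⌊r * (n:ℝ)⌋ := by
  have hmn : (m:ℝ) + 1 ≤ (n:ℝ) := by exact_mod_cast h
  have h1 : r * (m:ℝ) + ((1:ℤ):ℝ) ≤ r * (n:ℝ) := by push_cast; nlinarith
  have h2 := Int.floor_le_floor h1
  rw [Int.floor_add_intCast] at h2
  omega

lemma floor_mono (hr : 0 < r) (m n : ℕ) (h : m ≤ n) :
    ⌊r * (m:ℝ)⌋ ≤ ⌊r * (n:ℝ)⌋ := by
  apply Int.floor_le_floor
  have : (m:ℝ) ≤ (n:ℝ) := by exact_mod_cast h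
  nlinarith

/-- Beatty: every positive natural is in one of the two sequences. -/
lemma beatty_nat (hβ : 2 < β) (hirr : Irrational β) (hα : 1 / α + 1 / β = 1)
    (y : ℕ) (hy : 0 < y) :
    (∃ m : ℕ, 0 < m ∧ (y:ℤ) = ⌊α * m⌋) ∨ (∃ m : ℕ, 0 < m ∧ (y:ℤ) = ⌊β * m⌋) := by
  obtain ⟨hα1, hα2⟩ := aux_alpha hβ hα
  have hαirr := aux_irr hβ hirr hα
  have hconj : Real.HolderConjugate α β := Real.holderConjugate_iff.mpr ⟨hα1, by rw [← one_div, ← one_div]; exact hα⟩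
  have hpart := hαirr.beattySeq_symmDiff_beattySeq_pos hconj
  have hj : ((y:ℤ)) ∈ {n : ℤ | 0 < n} := by
    simp only [Set.mem_setOf_eq]; exact_mod_cast hy
  rw [← hpart, Set.mem_symmDiff] at hj
  have key : ∀ r : ℝ, (y:ℤ) ∈ {x | ∃ k > 0, beattySeq r k = x} →
      ∃ m : ℕ, 0 < m ∧ (y:ℤ) = ⌊r * m⌋ := by
    rintro r ⟨k, hk, hke⟩
    refine ⟨k.toNat, by omega, ?_⟩
    have hcast : ((k.toNat : ℕ) : ℝ) = (k : ℝ) := by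
      exact_mod_cast congrArg (fun z : ℤ => (z : ℝ)) (Int.toNat_of_nonneg hk.le)
    rw [← hke, beattySeq, mul_comm, hcast]
  rcases hj with ⟨h, -⟩ | ⟨h, -⟩
  · exact Or.inl (key α h)
  · exact Or.inr (key β h)

/-- the key one-sided lemma: first pile black -/
lemma key_lemma (β α : ℝ) (hβ : 2 < β) (hirr : Irrational β)
    (hα : 1 / α + 1 / β = 1)
    (S : Set ℕ) (hS : S = {m : ℕ | ∃ n : ℕ, 0 < n ∧ (m : ℤ) = ⌊β * n⌋})
    (x y : ℕ) (hx : x ∈ S ∪ {0})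
    (hform : ¬ ∃ n : ℕ, (x : ℤ) = ⌊β * n⌋ ∧ (y : ℤ) = ⌊α * n⌋) :
    ∃ x' y' : ℕ, ((x' < x ∧ y' = y) ∨ (x' = x ∧ y' < y)) ∧
      (x' ∈ S ∪ {0} ∨ y' ∈ S ∪ {0}) ∧
      ∃ m : ℕ, ((x' : ℤ) = ⌊α * m⌋ ∧ (y' : ℤ) = ⌊β * m⌋) ∨
               ((x' : ℤ) = ⌊β * m⌋ ∧ (y' : ℤ) = ⌊α * m⌋) := by
  obtain ⟨hα1, hα2⟩ := aux_alpha hβ hα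
  have hβ1 : (1:ℝ) < β := by linarith
  have hαβ : α ≤ β := by linarith
  have hmemS : ∀ z : ℕ, (∃ n : ℕ, 0 < n ∧ (z:ℤ) = ⌊β * n⌋) → z ∈ S ∪ {0} :=
    fun z hz => Set.mem_union_left _ (by rw [hS]; exact hz)
  have hmem0 : (0:ℕ) ∈ S ∪ {0} := Set.mem_union_right _ rfl
  rcases hx with hx | hx0
  · -- x ∈ S
    rw [hS] at hx
    obtain ⟨n, hn, hxn⟩ := hx
    have hx2 : (2:ℤ) ≤ (x:ℤ) := by
      rw [hxn, Int.le_floor]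
      push_cast
      have : (1:ℝ) ≤ (n:ℝ) := by exact_mod_cast hn
      nlinarith
    rcases lt_trichotomy ((y:ℤ)) ⌊α * (n:ℝ)⌋ with h | h | h
    · by_cases hy0 : y = 0
      · refine ⟨0, y, Or.inl ⟨by omega, rfl⟩, Or.inl (Or.inr rfl), 0, Or.inl ?_⟩
        subst hy0; norm_num
      · rcases beatty_nat hβ hirr hα y (Nat.pos_of_ne_zero hy0) with ⟨m, hm, hym⟩ | ⟨m, hm, hym⟩
        · -- y = ⌊α m⌋, move x down to ⌊β m⌋
          have hmn : m < n := by
            by_contra hc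
            push_neg at hc
            have := floor_mono (by linarith : (0:ℝ) < α) n m hc
            omega
          refine ⟨(⌊β * (m:ℝ)⌋).toNat, y, ?_, ?_, m, Or.inr ⟨?_, hym⟩⟩
          · left
            constructor
            · have hlt := floor_strict hβ1 m n hmn
              have hnn : (0:ℤ) ≤ ⌊β * (m:ℝ)⌋ := Int.floor_nonneg.mpr (by positivity)
              omega
            · rfl
          · exact Or.inl (hmemS _ ⟨m, hm, by
              rw [Int.toNat_of_nonneg (Int.floor_nonneg.mpr (by positivity))]⟩)
          · rw [Int.toNat_of_nonneg (Int.floor_nonneg.mpr (by positivity))]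
        · -- y = ⌊β m⌋, move x down to ⌊α m⌋
          have hle : ⌊α * (m:ℝ)⌋ ≤ ⌊β * (m:ℝ)⌋ := by
            apply Int.floor_le_floor; nlinarith [Nat.cast_nonneg (α := ℝ) m]
          have hlt : ⌊α * (m:ℝ)⌋ < (x:ℤ) := by
            have h2 : ⌊α * (n:ℝ)⌋ ≤ ⌊β * (n:ℝ)⌋ := by
              apply Int.floor_le_floor; nlinarith [Nat.cast_nonneg (α := ℝ) n]
            omega
          refine ⟨(⌊α * (m:ℝ)⌋).toNat, y, ?_, ?_, m, Or.inl ⟨?_, hym⟩⟩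
          · left
            constructor
            · have hnn : (0:ℤ) ≤ ⌊α * (m:ℝ)⌋ := Int.floor_nonneg.mpr (by positivity)
              omega
            · rfl
          · exact Or.inr (hmemS _ ⟨m, hm, hym⟩)
          · rw [Int.toNat_of_nonneg (Int.floor_nonneg.mpr (by positivity))]
    · exact absurd ⟨n, hxn, h⟩ hform
    · -- move y down to ⌊α n⌋
      have hnn : (0:ℤ) ≤ ⌊α * (n:ℝ)⌋ := Int.floor_nonneg.mpr (by positivity)
      refine ⟨x, (⌊α * (n:ℝ)⌋).toNat, Or.inr ⟨rfl, by omega⟩, ?_, n, Or.inr ⟨hxn, ?_⟩⟩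
      · exact Or.inl (hmemS _ ⟨n, hn, hxn⟩)
      · rw [Int.toNat_of_nonneg hnn]
  · -- x = 0
    have hx0' : x = 0 := hx0
    have hy0 : y ≠ 0 := by
      intro h
      exact hform ⟨0, by simp [hx0', h]⟩
    refine ⟨0, 0, Or.inr ⟨by omega, by omega⟩, Or.inl hmem0, 0, Or.inl (by norm_num)⟩

end Aux

/-- if a legal position of 2-pile S-Nim (Beatty case) is not
of the form `{⌊αn⌋, ⌊βn⌋}`, then there is a legal move to a position of that form. -/
theorem stmt7 (β : ℝ) (hβ : 2 < β) (hirr : Irrational β)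
    (α : ℝ) (hα : 1 / α + 1 / β = 1)
    (S : Set ℕ) (hS : S = {m : ℕ | ∃ n : ℕ, 0 < n ∧ (m : ℤ) = ⌊β * n⌋})
    (x y : ℕ) (hleg : Legal S (x, y))
    (hform : ¬ ∃ n : ℕ, ((x : ℤ) = ⌊α * n⌋ ∧ (y : ℤ) = ⌊β * n⌋) ∨
                        ((x : ℤ) = ⌊β * n⌋ ∧ (y : ℤ) = ⌊α * n⌋)) :
    ∃ x' y' : ℕ, Move (x, y) (x', y') ∧ Legal S (x', y') ∧
      ∃ m : ℕ, ((x' : ℤ) = ⌊α * m⌋ ∧ (y' : ℤ) = ⌊β * m⌋) ∨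
               ((x' : ℤ) = ⌊β * m⌋ ∧ (y' : ℤ) = ⌊α * m⌋) := by
  rcases hleg with hx | hy
  · obtain ⟨x', y', hmove, hleg', m, hf⟩ :=
      key_lemma β α hβ hirr hα S hS x y hx
        (fun ⟨n, h1, h2⟩ => hform ⟨n, Or.inr ⟨h1, h2⟩⟩)
    exact ⟨x', y', hmove, hleg', m, hf⟩
  · obtain ⟨a, b, hmove, hleg', m, hf⟩ :=
      key_lemma β α hβ hirr hα S hS y x hy
        (fun ⟨n, h1, h2⟩ => hform ⟨n, Or.inl ⟨h2, h1⟩⟩)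
    refine ⟨b, a, ?_, ?_, m, ?_⟩
    · rcases hmove with ⟨h1, h2⟩ | ⟨h1, h2⟩
      · exact Or.inr ⟨h2, h1⟩
      · exact Or.inl ⟨h2, h1⟩
    · exact hleg'.symm
    · tauto
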